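/- Every closed additive subgroup Γ of the m-dimensional torus 𝕋^m = (Fin m → AddCircle (1:ℝ)), regarded as a topological space with the subspace topology, has only finitely many connected components; equivalently, the connected component of 0 in Γ has finite index in Γ. -/

import Mathlib

open AddCircle Set Filter Topology

noncomputable section
instance : Fact ((0:ℝ) < 1) := ⟨one_pos⟩

def Lift (x : AddCircle (1:ℝ)) : ℝ := (equivIco 1 (-(1/2)) x : ℝ)

lemma Lift_coe (x : AddCircle (1:ℝ)) : ((Lift x : ℝ) : AddCircle (1:ℝ)) = x :=
  (equivIco 1 (-(1/2))).symm_apply_apply x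

lemma Lift_zero : Lift 0 = 0 := by
  have h0 : ((0:ℝ) : AddCircle (1:ℝ)) = 0 := rfl
  have h : (equivIco (1:ℝ) (-(1/2)) ((0:ℝ):AddCircle (1:ℝ)))
      = ⟨toIcoMod one_pos (-(1/2)) 0, toIcoMod_mem_Ico one_pos _ _⟩ :=
    QuotientAddGroup.equivIcoMod_coe one_pos _ _
  have ht : toIcoMod (one_pos) (-(1/2):ℝ) 0 = 0 := by
    rw [toIcoMod_eq_self]
    constructor <;> norm_num
  rw [Lift, ← h0, h]
  simpa using ht

lemma ne_half : (0 : AddCircle (1:ℝ)) ≠ ((-(1/2) : ℝ) : AddCircle (1:ℝ)) := by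
  intro h
  have h2 : ((-(1/2) : ℝ) : AddCircle (1:ℝ)) = 0 := h.symm
  rw [AddCircle.coe_eq_zero_iff] at h2
  obtain ⟨n, hn⟩ := h2
  have hn' : (n : ℝ) = -(1/2) := by rwa [zsmul_eq_mul, mul_one] at hn
  have h3 : ((2*n : ℤ) : ℝ) = -1 := by push_cast; linarith
  have h4 : (2*n : ℤ) = -1 := by exact_mod_cast h3
  omega

lemma Lift_continuousAt : ContinuousAt Lift 0 :=
  continuousAt_subtype_val.comp (continuousAt_equivIco 1 (-(1/2)) ne_half)

def pmap (m : ℕ) : (Fin m → ℝ) →+ (Fin m → AddCircle (1:ℝ)) where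
  toFun v i := (v i : AddCircle (1:ℝ))
  map_zero' := by funext i; simp
  map_add' v w := by funext i; simp

lemma pmap_continuous (m : ℕ) : Continuous (pmap m) :=
  continuous_pi fun i => (AddCircle.continuous_mk' 1).comp (continuous_apply i)

def Wsub (m : ℕ) (Γ : AddSubgroup (Fin m → AddCircle (1:ℝ))) : Submodule ℝ (Fin m → ℝ) where
  carrier := {v | ∀ t : ℝ, pmap m (t • v) ∈ Γ}
  zero_mem' := by intro t; rw [smul_zero, map_zero]; exact Γ.zero_mem
  add_mem' := by
    intro v w hv hw t
    rw [smul_add, map_add]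
    exact Γ.add_mem (hv t) (hw t)
  smul_mem' := by
    intro c v hv t
    rw [smul_smul]
    exact hv (t * c)

def Λ (m : ℕ) (Γ : AddSubgroup (Fin m → AddCircle (1:ℝ))) : AddSubgroup (Fin m → AddCircle (1:ℝ)) :=
  (Wsub m Γ).toAddSubgroup.map (pmap m)

lemma Λ_le (m : ℕ) (Γ : AddSubgroup (Fin m → AddCircle (1:ℝ))) : Λ m Γ ≤ Γ := by
  rintro x ⟨v, hv, rfl⟩
  have h := (hv : ∀ t : ℝ, pmap m (t • v) ∈ Γ) 1
  rwa [one_smul] at h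

set_option maxHeartbeats 1000000 in
lemma key (m : ℕ) (Γ : AddSubgroup (Fin m → AddCircle (1:ℝ)))
    (hΓ : IsClosed (Γ : Set (Fin m → AddCircle (1:ℝ)))) :
    ∀ᶠ z in 𝓝 (0 : Fin m → AddCircle (1:ℝ)), z ∈ Γ → z ∈ Λ m Γ := by
  by_contra h
  rw [Filter.not_eventually] at h
  have hfreq : ∃ᶠ z in 𝓝 (0 : Fin m → AddCircle (1:ℝ)), z ∈ {z | z ∈ Γ ∧ z ∉ Λ m Γ} :=
    h.mono (fun z hz => by push_neg at hz; exact hz)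
  have hcl : (0 : Fin m → AddCircle (1:ℝ)) ∈ closure {z | z ∈ Γ ∧ z ∉ Λ m Γ} :=
    mem_closure_iff_frequently.2 hfreq
  obtain ⟨y, hy, hylim⟩ := mem_closure_iff_seq_limit.1 hcl
  set W := Wsub m Γ with hWdef
  set v : ℕ → (Fin m → ℝ) := fun n i => Lift (y n i) with hvdef
  have hpv : ∀ n, pmap m (v n) = y n := fun n => funext fun i => Lift_coe _
  have hvlim : Tendsto v atTop (𝓝 0) := by
    have hc : ContinuousAt (fun z : Fin m → AddCircle (1:ℝ) => fun i => Lift (z i)) 0 := by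
      apply continuousAt_pi.2
      intro i
      have h1 : ContinuousAt (fun z : Fin m → AddCircle (1:ℝ) => z i) 0 :=
        (continuous_apply i).continuousAt
      have h2 : ContinuousAt Lift ((fun z : Fin m → AddCircle (1:ℝ) => z i) 0) := Lift_continuousAt
      exact ContinuousAt.comp (f := fun z : Fin m → AddCircle (1:ℝ) => z i)
        (x := (0 : Fin m → AddCircle (1:ℝ))) h2 h1
    have := hc.tendsto.comp hylim
    simp [Function.comp, Lift_zero] at this; exact this
  obtain ⟨W', hW'⟩ := Submodule.exists_isCompl W
  set proj := W'.projectionOnto W hW'.symm with hprojdef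
  have hprojcont : Continuous proj := proj.continuous_of_finiteDimensional
  set w : ℕ → (Fin m → ℝ) := fun n => (proj (v n) : Fin m → ℝ) with hwdef
  have hwW' : ∀ n, w n ∈ W' := fun n => (proj (v n)).2
  have hdiffW : ∀ n, v n - w n ∈ W := by
    intro n
    have hz : proj (v n - w n) = 0 := by
      rw [map_sub, Submodule.projectionOnto_apply_left, sub_self]
    have hk : LinearMap.ker proj = W := Submodule.ker_projectionOnto hW'.symm
    rw [← hk]
    exact LinearMap.mem_ker.2 hz
  have hwΓ : ∀ n, pmap m (w n) ∈ Γ := by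
    intro n
    have h1 : pmap m (v n - w n) ∈ Γ := by
      have h2 := (hdiffW n : ∀ t : ℝ, pmap m (t • (v n - w n)) ∈ Γ) 1
      rwa [one_smul] at h2
    have h3 : w n = v n - (v n - w n) := by abel
    rw [h3, map_sub]
    exact Γ.sub_mem (by rw [hpv]; exact (hy n).1) h1
  have hwne : ∀ n, w n ≠ 0 := by
    intro n h0
    apply (hy n).2
    refine ⟨v n, ?_, hpv n⟩
    have h4 := hdiffW n
    rw [h0, sub_zero] at h4
    exact h4
  have hwlim : Tendsto w atTop (𝓝 0) := by
    have h5 : Tendsto (fun n => proj (v n)) atTop (𝓝 (proj 0)) :=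
      (hprojcont.tendsto 0).comp hvlim
    rw [map_zero] at h5
    have := (continuous_subtype_val.tendsto _).comp h5
    simp [Function.comp] at this; exact this
  set r : ℕ → ℝ := fun n => ‖w n‖ with hrdef
  have hrpos : ∀ n, 0 < r n := fun n => norm_pos_iff.2 (hwne n)
  have hrlim : Tendsto r atTop (𝓝 0) := by
    have := (continuous_norm.tendsto (0 : Fin m → ℝ)).comp hwlim
    simp [Function.comp] at this; exact this
  set u : ℕ → (Fin m → ℝ) := fun n => (r n)⁻¹ • w n with hudef
  have huW' : ∀ n, u n ∈ W' := fun n => W'.smul_mem _ (hwW' n)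
  have hunorm : ∀ n, ‖u n‖ = 1 := by
    intro n
    rw [norm_smul, norm_inv, norm_norm]
    exact inv_mul_cancel₀ (hrpos n).ne'
  set K := Metric.sphere (0 : Fin m → ℝ) 1 ∩ (W' : Set (Fin m → ℝ)) with hKdef
  have hK : IsCompact K :=
    (isCompact_sphere 0 1).inter_right (Submodule.closed_of_finiteDimensional W')
  have huK : ∀ n, u n ∈ K := fun n => ⟨mem_sphere_zero_iff_norm.2 (hunorm n), huW' n⟩
  obtain ⟨a, haK, φ, hφ, halim⟩ := hK.tendsto_subseq huK
  have haW : a ∈ W := by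
    show ∀ t : ℝ, pmap m (t • a) ∈ Γ
    intro t
    set k : ℕ → ℤ := fun n => ⌊t / r (φ n)⌋ with hkdef
    have hrφ : Tendsto (fun n => r (φ n)) atTop (𝓝 0) := hrlim.comp hφ.tendsto_atTop
    have h1 : ∀ n, |(k n : ℝ) * r (φ n) - t| ≤ r (φ n) := by
      intro n
      have hr := hrpos (φ n)
      have h2 : (k n : ℝ) ≤ t / r (φ n) := Int.floor_le _
      have h3 : t / r (φ n) - 1 < (k n : ℝ) := Int.sub_one_lt_floor _
      have h4 : t / r (φ n) * r (φ n) = t := div_mul_cancel₀ t hr.ne'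
      rw [abs_le]
      constructor
      · nlinarith [mul_lt_mul_of_pos_right h3 hr]
      · nlinarith [mul_le_mul_of_nonneg_right h2 hr.le]
    have hklim : Tendsto (fun n => (k n : ℝ) * r (φ n)) atTop (𝓝 t) := by
      have habs : Tendsto (fun n => |(k n : ℝ) * r (φ n) - t|) atTop (𝓝 0) :=
        squeeze_zero (fun n => abs_nonneg _) h1 hrφ
      have hsub : Tendsto (fun n => (k n : ℝ) * r (φ n) - t) atTop (𝓝 0) := by
        rwa [tendsto_zero_iff_abs_tendsto_zero]
      have := hsub.add_const t
      simpa using this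
    have htend : Tendsto (fun n => ((k n : ℝ) * r (φ n)) • u (φ n)) atTop (𝓝 (t • a)) :=
      hklim.smul halim
    have hmem : ∀ n, pmap m (((k n : ℝ) * r (φ n)) • u (φ n)) ∈ Γ := by
      intro n
      have heq : ((k n : ℝ) * r (φ n)) • u (φ n) = (k n : ℤ) • w (φ n) := by
        rw [hudef, mul_smul, smul_inv_smul₀ (hrpos (φ n)).ne', Int.cast_smul_eq_zsmul]
      rw [heq, map_zsmul]
      exact AddSubgroup.zsmul_mem Γ (hwΓ (φ n)) _
    have hfin : Tendsto (fun n => pmap m (((k n : ℝ) * r (φ n)) • u (φ n))) atTop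
        (𝓝 (pmap m (t • a))) := ((pmap_continuous m).tendsto _).comp htend
    exact hΓ.mem_of_tendsto hfin (Filter.Eventually.of_forall hmem)
  have hbot : a ∈ W ⊓ W' := ⟨haW, haK.2⟩
  rw [hW'.inf_eq_bot] at hbot
  have ha0 : a = 0 := hbot
  have h1 : ‖a‖ = 1 := mem_sphere_zero_iff_norm.1 haK.1
  rw [ha0, norm_zero] at h1
  norm_num at h1

/-- Every closed additive subgroup of the torus `𝕋^m = (Fin m → AddCircle 1)` has only
finitely many connected components (with respect to the subspace topology). -/
theorem closed_subgroup_torus_finite_components (m : ℕ)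
    (Γ : AddSubgroup (Fin m → AddCircle (1 : ℝ)))
    (hΓ : IsClosed (Γ : Set (Fin m → AddCircle (1 : ℝ)))) :
    Finite (ConnectedComponents Γ) := by
  classical
  haveI : CompactSpace Γ := isCompact_iff_compactSpace.1 hΓ.isCompact
  set S : AddSubgroup Γ := (Λ m Γ).comap Γ.subtype with hSdef
  have hSnhds : (S : Set Γ) ∈ 𝓝 (0 : Γ) := by
    have hk := key m Γ hΓ
    have hcont : ContinuousAt (Subtype.val : Γ → (Fin m → AddCircle (1:ℝ))) 0 :=
      continuous_subtype_val.continuousAt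
    have hpre := hcont hk
    refine Filter.mem_of_superset hpre ?_
    intro x hx
    exact hx x.2
  have hSopen : IsOpen (S : Set Γ) := AddSubgroup.isOpen_of_mem_nhds S hSnhds
  have hWpre : IsPreconnected ((Wsub m Γ) : Set (Fin m → ℝ)) :=
    (Wsub m Γ).convex.isPreconnected
  have hSpre : IsPreconnected (S : Set Γ) := by
    haveI : PreconnectedSpace (Wsub m Γ) := Subtype.preconnectedSpace hWpre
    let f : (Wsub m Γ) → Γ := fun v => ⟨pmap m v, Λ_le m Γ ⟨v, v.2, rfl⟩⟩
    have hfc : Continuous f :=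
      Continuous.subtype_mk ((pmap_continuous m).comp continuous_subtype_val) _
    have hrange : range f = (S : Set Γ) := by
      ext x
      constructor
      · rintro ⟨v, rfl⟩
        exact ⟨v, v.2, rfl⟩
      · rintro ⟨v, hv, hvx⟩
        exact ⟨⟨v, hv⟩, Subtype.ext hvx⟩
    rw [← hrange]
    exact isPreconnected_range hfc
  have hopen : ∀ x : Γ, IsOpen (connectedComponent x) := by
    intro x
    have hsub : ∀ y : Γ, y ∈ connectedComponent x →
        (fun z => y + z) '' (S : Set Γ) ⊆ connectedComponent x := by
      intro y hy
      have hpre : IsPreconnected ((fun z => y + z) '' (S : Set Γ)) :=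
        hSpre.image _ (Continuous.continuousOn (continuous_const.add continuous_id))
      have hmem : y ∈ (fun z => y + z) '' (S : Set Γ) := ⟨0, S.zero_mem, by simp⟩
      have hsub2 := hpre.subset_connectedComponent hmem
      rwa [← connectedComponent_eq hy] at hsub2
    have hcover : connectedComponent x = ⋃ y ∈ connectedComponent x,
        (fun z => y + z) '' (S : Set Γ) := by
      apply Subset.antisymm
      · intro y hy
        exact mem_biUnion hy ⟨0, S.zero_mem, by simp⟩
      · exact iUnion₂_subset hsub
    rw [hcover]
    exact isOpen_biUnion fun y hy => (Homeomorph.addLeft y).isOpenMap _ hSopen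
  haveI : DiscreteTopology (ConnectedComponents Γ) := by
    rw [discreteTopology_iff_isOpen_singleton]
    intro c
    obtain ⟨x, rfl⟩ := ConnectedComponents.surjective_coe c
    rw [← (ConnectedComponents.isQuotientMap_coe).isOpen_preimage,
      connectedComponents_preimage_singleton]
    exact hopen x
  haveI : CompactSpace (ConnectedComponents Γ) := Quotient.compactSpace
  exact finite_of_compact_of_discrete

end
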